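/- Let C^a = (R^a_1,T_1),…,(R^a_k,T_k) and C^b = (R^b_1,T_1),…,(R^b_k,T_k) be time-aligned OVs. Then ⟦C^a⟧ and ⟦C^b⟧ are disjoint (⟦C^a⟧ ∩ ⟦C^b⟧ = ∅) if and only if the regions are pointwise disjoint, i.e. R^a_i ∩ R^b_i = ∅ for every i ∈ {1,…,k}. -/

import Mathlib

open Set

/-- The semantics of an operation volume (OV) with regions `R` and strictly
increasing time points `T`: the subset of space-time
`(⋃_{i<k} R_i × [T_i, T_{i+1})) ∪ (R_last × [T_last, ∞))`. -/
def OVsem {k : ℕ} (R : Fin (k + 1) → Set (Fin 3 → ℝ)) (T : Fin (k + 1) → ℝ) :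
    Set ((Fin 3 → ℝ) × ℝ) :=
  (⋃ i : Fin k,
      {p : (Fin 3 → ℝ) × ℝ | p.1 ∈ R i.castSucc ∧ T i.castSucc ≤ p.2 ∧ p.2 < T i.succ}) ∪
    {p : (Fin 3 → ℝ) × ℝ | p.1 ∈ R (Fin.last k) ∧ T (Fin.last k) ≤ p.2}

lemma mem_OVsem_of_mem {k : ℕ} (R : Fin (k + 1) → Set (Fin 3 → ℝ)) (T : Fin (k + 1) → ℝ)
    (hT : StrictMono T) (i : Fin (k + 1)) (r : Fin 3 → ℝ) (hr : r ∈ R i) :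
    (r, T i) ∈ OVsem R T := by
  induction i using Fin.lastCases with
  | last => exact Or.inr ⟨hr, le_refl _⟩
  | cast j =>
    exact Or.inl (mem_iUnion.mpr ⟨j, hr, le_refl _, hT (Fin.castSucc_lt_succ (i := j))⟩)

/-- For time-aligned OVs, the represented sets of space-time are disjoint iff
the regions are pointwise disjoint. -/
theorem sem_disjoint_iff {k : ℕ}
    (Ra Rb : Fin (k + 1) → Set (Fin 3 → ℝ)) (T : Fin (k + 1) → ℝ)
    (hT : StrictMono T) :
    OVsem Ra T ∩ OVsem Rb T = ∅ ↔ ∀ i : Fin (k + 1), Ra i ∩ Rb i = ∅ := by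
  constructor
  · intro h i
    ext r
    simp only [mem_inter_iff, mem_empty_iff_false, iff_false, not_and]
    intro ha hb
    have hmem : (r, T i) ∈ OVsem Ra T ∩ OVsem Rb T :=
      ⟨mem_OVsem_of_mem Ra T hT i r ha, mem_OVsem_of_mem Rb T hT i r hb⟩
    rw [h] at hmem
    exact hmem
  · intro h
    ext p
    simp only [mem_inter_iff, mem_empty_iff_false, iff_false, not_and]
    intro hpa hpb
    rcases hpa with hpa | hpa <;> rcases hpb with hpb | hpb
    · obtain ⟨i, hia, hi1, hi2⟩ := mem_iUnion.mp hpa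
      obtain ⟨j, hjb, hj1, hj2⟩ := mem_iUnion.mp hpb
      have hij : i = j := by
        have h1 : j.castSucc < i.succ := hT.lt_iff_lt.mp (lt_of_le_of_lt hj1 hi2)
        have h2 : i.castSucc < j.succ := hT.lt_iff_lt.mp (lt_of_le_of_lt hi1 hj2)
        have : (j : ℕ) < i + 1 := h1
        have : (i : ℕ) < j + 1 := h2
        omega
      subst hij
      have : p.1 ∈ Ra i.castSucc ∩ Rb i.castSucc := ⟨hia, hjb⟩
      rw [h i.castSucc] at this
      exact this
    · obtain ⟨i, hia, hi1, hi2⟩ := mem_iUnion.mp hpa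
      have : T (Fin.last k) < T i.succ := lt_of_le_of_lt hpb.2 hi2
      exact absurd (hT.lt_iff_lt.mp this) (not_lt.mpr (Fin.le_last _))
    · obtain ⟨i, hib, hi1, hi2⟩ := mem_iUnion.mp hpb
      have : T (Fin.last k) < T i.succ := lt_of_le_of_lt hpa.2 hi2
      exact absurd (hT.lt_iff_lt.mp this) (not_lt.mpr (Fin.le_last _))
    · have : p.1 ∈ Ra (Fin.last k) ∩ Rb (Fin.last k) := ⟨hpa.1, hpb.1⟩
      rw [h (Fin.last k)] at this
      exact this
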